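/- For every measure space (M, Σ, μ), the space L_∞(μ) admits a lattice tiling by closed unit balls: there exists an additive subgroup D of L_∞(μ) (namely, the classes of functions with values in the even integers 2ℤ) that is 2-separated and 1-dense, so the closed balls of radius 1 centered at points of D have mutually disjoint interiors and cover L_∞(μ). In particular, γ*(L_∞(μ)) = 1. -/

import Mathlib

open Set Metric ENNReal

universe u

/-- A set `P` in a normed space is `r`-separated if `‖x - y‖ ≥ r`
for all distinct `x, y ∈ P`. -/
def IsRSeparated {X : Type u} [NormedAddCommGroup X] (r : ℝ) (P : Set X) : Prop :=
  ∀ x ∈ P, ∀ y ∈ P, x ≠ y → r ≤ ‖x - y‖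

/-- A set `P` in a normed space is `r`-dense if every point of the space is within
distance `r` of some point of `P`. -/
def IsRDense {X : Type u} [NormedAddCommGroup X] (r : ℝ) (P : Set X) : Prop :=
  ∀ x : X, ∃ p ∈ P, ‖x - p‖ ≤ r

/-- The simultaneous packing and covering constant `γ(X)`: the infimum of all `r > 0`
for which `X` contains a set that is simultaneously `2`-separated and `r`-dense. -/
noncomputable def packingCovering (X : Type u) [NormedAddCommGroup X] : ℝ :=
  sInf {r : ℝ | 0 < r ∧ ∃ P : Set X, IsRSeparated 2 P ∧ IsRDense r P}

/-- The lattice simultaneous packing and covering constant `γ*(X)`: the infimum of all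
`r > 0` for which `X` contains an additive subgroup that is simultaneously `2`-separated
and `r`-dense. -/
noncomputable def packingCoveringStar (X : Type u) [NormedAddCommGroup X] : ℝ :=
  sInf {r : ℝ | 0 < r ∧ ∃ D : AddSubgroup X,
    IsRSeparated 2 (D : Set X) ∧ IsRDense r (D : Set X)}

/-- The Kottman constant `K(X)`: the supremum of all `r > 0` such that the closed unit
ball of `X` contains an infinite `r`-separated set. -/
noncomputable def kottman (X : Type u) [NormedAddCommGroup X] : ℝ :=
  sSup {r : ℝ | 0 < r ∧ ∃ P : Set X,
    P ⊆ closedBall (0 : X) 1 ∧ P.Infinite ∧ IsRSeparated r P}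

/-- The `κ`-Kottman constant `K(X; κ)`: the supremum of all `r > 0` such that the closed
unit ball of `X` contains an `r`-separated set of cardinality `κ`. -/
noncomputable def kottmanCard (X : Type u) [NormedAddCommGroup X] (κ : Cardinal.{u}) : ℝ :=
  sSup {r : ℝ | 0 < r ∧ ∃ P : Set X,
    P ⊆ closedBall (0 : X) 1 ∧ Cardinal.mk ↥P = κ ∧ IsRSeparated r P}

/-- The density character of a topological space: the smallest cardinality of a dense
subset. -/
noncomputable def densChar (X : Type u) [TopologicalSpace X] : Cardinal.{u} :=
  sInf {c : Cardinal.{u} | ∃ s : Set X, Dense s ∧ Cardinal.mk ↥s = c}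

/-- The modulus of local uniform rotundity `δ_X(x₀, ε)` at a point `x₀`. -/
noncomputable def lurModulus {X : Type u} [NormedAddCommGroup X] (x₀ : X) (ε : ℝ) : ℝ :=
  sInf {d : ℝ | ∃ y : X, ‖y‖ ≤ 1 ∧ ε ≤ ‖x₀ - y‖ ∧ d = 1 - ‖x₀ + y‖ / 2}

/-- `x₀` is a LUR (locally uniformly rotund) point of the unit ball of `X` if it lies on
the unit sphere and `δ_X(x₀, ε) > 0` for every `ε ∈ (0, 2]`. -/
def IsLURPoint {X : Type u} [NormedAddCommGroup X] (x₀ : X) : Prop :=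
  ‖x₀‖ = 1 ∧ ∀ ε : ℝ, 0 < ε → ε ≤ 2 → 0 < lurModulus x₀ ε

/-- The modulus of convexity `δ_X(ε)` of a normed space `X`. -/
noncomputable def convexityModulus (X : Type u) [NormedAddCommGroup X] (ε : ℝ) : ℝ :=
  sInf {d : ℝ | ∃ x y : X, ‖x‖ ≤ 1 ∧ ‖y‖ ≤ 1 ∧ ε ≤ ‖x - y‖ ∧ d = 1 - ‖x + y‖ / 2}

/-- The tangential modulus of convexity `φ_X(t)`, defined through Birkhoff-James
orthogonality: `φ_X(t) = inf {‖x + t v‖ - 1 : x, v ∈ S_X, x ⊥_BJ v}`. -/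
noncomputable def tangentialModulus (X : Type u) [NormedAddCommGroup X]
    [NormedSpace ℝ X] (t : ℝ) : ℝ :=
  sInf {d : ℝ | ∃ x v : X, ‖x‖ = 1 ∧ ‖v‖ = 1 ∧
    (∀ lam : ℝ, ‖x‖ ≤ ‖x + lam • v‖) ∧ d = ‖x + t • v‖ - 1}

/-- `φ : [0,∞) → [0,∞)` is a positive modulus: `φ(0) = 0`, `φ` is continuous at `0`,
`t ↦ φ(t)/t` is non-decreasing on `(0,∞)`, and `φ(t) > 0` for `t > 0`. -/
def IsPositiveModulus (φ : ℝ → ℝ) : Prop :=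
  φ 0 = 0 ∧ Filter.Tendsto φ (nhdsWithin 0 (Set.Ici 0)) (nhds 0) ∧
    (∀ s t : ℝ, 0 < s → s ≤ t → φ s / s ≤ φ t / t) ∧ ∀ t : ℝ, 0 < t → 0 < φ t

/-- The positive modulus `φ_p(t) = (1 + t^p)^(1/p) - 1` (real exponents). -/
noncomputable def phiP (p : ℝ) (t : ℝ) : ℝ := (1 + t ^ p) ^ (1 / p) - 1

/-- A normed space `X` is `(<κ)-octahedral` if for every `ε > 0` and every closed
subspace `Z` of `X` of density character `< κ` there is a unit vector `x` with
`‖z + λ x‖ ≥ (1 - ε)(‖z‖ + |λ|)` for all `z ∈ Z`, `λ ∈ ℝ`. -/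
def KappaOctahedral (κ : Cardinal.{u}) (X : Type u) [NormedAddCommGroup X]
    [NormedSpace ℝ X] : Prop :=
  ∀ ε : ℝ, 0 < ε → ∀ Z : Submodule ℝ X, IsClosed (Z : Set X) → densChar ↥Z < κ →
    ∃ x : X, ‖x‖ = 1 ∧ ∀ z ∈ Z, ∀ lam : ℝ, (1 - ε) * (‖z‖ + |lam|) ≤ ‖z + lam • x‖

/-- A normed space `X` is `(<κ)-φ-octahedral` if for every `ε > 0` and every closed
subspace `Z` of `X` of density character `< κ` there is a unit vector `x` with
`‖z + λ x‖ ≥ (1 - ε)(1 + φ(|λ|))` for all `z` in the unit sphere of `Z` and `λ ∈ ℝ`. -/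
def PhiOctahedral (κ : Cardinal.{u}) (φ : ℝ → ℝ) (X : Type u) [NormedAddCommGroup X]
    [NormedSpace ℝ X] : Prop :=
  ∀ ε : ℝ, 0 < ε → ∀ Z : Submodule ℝ X, IsClosed (Z : Set X) → densChar ↥Z < κ →
    ∃ x : X, ‖x‖ = 1 ∧ ∀ z ∈ Z, ‖z‖ = 1 →
      ∀ lam : ℝ, (1 - ε) * (1 + φ |lam|) ≤ ‖z + lam • x‖

/-- For every measure space `(M, Σ, μ)`, the space `L_∞(μ)` admits a
lattice tiling by closed unit balls: there is an additive subgroup `D` of `L_∞(μ)` that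
is `2`-separated and `1`-dense. -/
theorem Linfty_lattice_tiling {M : Type u} [MeasurableSpace M]
    (μ : MeasureTheory.Measure M) :
    ∃ D : AddSubgroup (MeasureTheory.Lp ℝ ⊤ μ),
      IsRSeparated 2 (D : Set (MeasureTheory.Lp ℝ ⊤ μ)) ∧
        IsRDense 1 (D : Set (MeasureTheory.Lp ℝ ⊤ μ)) := by
  classical
  set S : Set (MeasureTheory.Lp ℝ ⊤ μ) :=
    {f : MeasureTheory.Lp ℝ ⊤ μ | ∀ᵐ x ∂μ, ∃ n : ℤ, (f : M → ℝ) x = 2 * n} with hS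
  have hmemS : ∀ f : MeasureTheory.Lp ℝ ⊤ μ,
      f ∈ S ↔ ∀ᵐ x ∂μ, ∃ n : ℤ, (f : M → ℝ) x = 2 * n := fun f => Iff.rfl
  refine ⟨{ carrier := S, zero_mem' := ?_, add_mem' := ?_, neg_mem' := ?_ }, ?_, ?_⟩
  · rintro f g hf hg
    filter_upwards [hf, hg, MeasureTheory.Lp.coeFn_add f g] with x hfx hgx hx
    obtain ⟨n, hn⟩ := hfx
    obtain ⟨m, hm⟩ := hgx
    refine ⟨n + m, ?_⟩
    simp only [hx, Pi.add_apply, hn, hm]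
    push_cast
    ring
  · filter_upwards [MeasureTheory.Lp.coeFn_zero ℝ ⊤ μ] with x hx
    exact ⟨0, by rw [hx]; simp⟩
  · rintro f hf
    filter_upwards [hf, MeasureTheory.Lp.coeFn_neg f] with x hfx hx
    obtain ⟨n, hn⟩ := hfx
    refine ⟨-n, ?_⟩
    simp only [hx, Pi.neg_apply, hn]
    push_cast
    ring
  · -- 2-separated
    intro f hf g hg hfg
    by_contra hlt
    push_neg at hlt
    apply hfg
    refine sub_eq_zero.mp (MeasureTheory.Lp.ext ?_)
    have hsub : ∀ᵐ x ∂μ, ∃ n : ℤ, ((f - g : MeasureTheory.Lp ℝ ⊤ μ) : M → ℝ) x = 2 * n := by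
      filter_upwards [hf, hg, MeasureTheory.Lp.coeFn_sub f g] with x hfx hgx hx
      obtain ⟨n, hn⟩ := hfx
      obtain ⟨m, hm⟩ := hgx
      refine ⟨n - m, ?_⟩
      simp only [hx, Pi.sub_apply, hn, hm]
      push_cast
      ring
    have hnorm : MeasureTheory.eLpNorm ((f - g : MeasureTheory.Lp ℝ ⊤ μ) : M → ℝ) ⊤ μ
        < ENNReal.ofReal 2 := by
      rw [ENNReal.lt_ofReal_iff_toReal_lt
        (MeasureTheory.Lp.eLpNorm_ne_top (f - g))]
      exact hlt
    have hb : ∀ᵐ x ∂μ, ‖((f - g : MeasureTheory.Lp ℝ ⊤ μ) : M → ℝ) x‖ < 2 := by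
      have := MeasureTheory.ae_le_eLpNormEssSup
        (f := ((f - g : MeasureTheory.Lp ℝ ⊤ μ) : M → ℝ)) (μ := μ)
      rw [MeasureTheory.eLpNorm_exponent_top] at hnorm
      filter_upwards [this] with x hx
      have h2 : (‖((f - g : MeasureTheory.Lp ℝ ⊤ μ) : M → ℝ) x‖₊ : ℝ≥0∞)
          < ENNReal.ofReal 2 := lt_of_le_of_lt hx hnorm
      have := (ENNReal.lt_ofReal_iff_toReal_lt (by simp)).mp h2
      simpa using this
    filter_upwards [hsub, hb, MeasureTheory.Lp.coeFn_zero ℝ ⊤ μ] with x hx hbx h0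
    obtain ⟨n, hn⟩ := hx
    rw [hn] at hbx ⊢
    rw [h0]
    have : |(n : ℝ)| < 1 := by
      rw [Real.norm_eq_abs, abs_mul] at hbx
      simp only [abs_two] at hbx
      linarith
    have hn0 : n = 0 := by
      have hlt1 : |n| < 1 := by exact_mod_cast this
      have := abs_lt.mp hlt1
      omega
    simp [hn0]
  · -- 1-dense
    intro f
    obtain ⟨f', hf'sm, hff'⟩ := (MeasureTheory.Lp.aestronglyMeasurable f)
    have hf'm : Measurable f' := hf'sm.measurable
    set g : M → ℝ := fun x => 2 * ((round (f' x / 2) : ℤ) : ℝ) with hg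
    have hgm : Measurable g := by
      have h1 : Measurable fun x => round (f' x / 2) := by
        simp only [round_eq]
        exact ((hf'm.div_const 2).add_const _).floor
      exact (measurable_from_top.comp h1 :
        Measurable fun x => ((round (f' x / 2) : ℤ) : ℝ)).const_mul 2
    have hclose : ∀ x, ‖f' x - g x‖ ≤ 1 := by
      intro x
      have := abs_sub_round (f' x / 2)
      rw [Real.norm_eq_abs, hg]
      have h2 : f' x - 2 * ((round (f' x / 2) : ℤ) : ℝ)
          = 2 * (f' x / 2 - (round (f' x / 2) : ℤ)) := by ring
      rw [h2, abs_mul, abs_two]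
      linarith
    have hfbd : ∀ᵐ x ∂μ, ‖(f : M → ℝ) x‖ ≤ ‖f‖ := by
      have h := MeasureTheory.ae_le_eLpNormEssSup (f := ((f : M → ℝ))) (μ := μ)
      filter_upwards [h] with x hx
      have hne : MeasureTheory.eLpNormEssSup ((f : M → ℝ)) μ ≠ ⊤ := by
        rw [← MeasureTheory.eLpNorm_exponent_top]
        exact MeasureTheory.Lp.eLpNorm_ne_top f
      have := ENNReal.toReal_mono hne hx
      rw [MeasureTheory.Lp.norm_def, MeasureTheory.eLpNorm_exponent_top]
      simpa using this
    have hmem : MeasureTheory.MemLp g ⊤ μ := by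
      refine MeasureTheory.memLp_top_of_bound hgm.aestronglyMeasurable (‖f‖ + 1) ?_
      filter_upwards [hfbd, hff'] with x hx hx'
      have h1 : ‖g x‖ ≤ ‖f' x‖ + 1 := by
        have := hclose x
        calc ‖g x‖ = ‖f' x - (f' x - g x)‖ := by ring_nf
          _ ≤ ‖f' x‖ + ‖f' x - g x‖ := norm_sub_le _ _
          _ ≤ ‖f' x‖ + 1 := by linarith
      rw [← hx'] at h1
      linarith
    refine ⟨hmem.toLp g, ?_, ?_⟩
    · show hmem.toLp g ∈ S
      rw [hmemS]
      filter_upwards [hmem.coeFn_toLp] with x hx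
      exact ⟨round (f' x / 2), by rw [hx]⟩
    · have hae : ∀ᵐ x ∂μ, ‖((f - hmem.toLp g : MeasureTheory.Lp ℝ ⊤ μ) : M → ℝ) x‖ ≤ 1 := by
        filter_upwards [MeasureTheory.Lp.coeFn_sub f (hmem.toLp g), hmem.coeFn_toLp, hff']
          with x hx hx' hx''
        rw [hx, Pi.sub_apply, hx', hx'']
        exact hclose x
      have := MeasureTheory.eLpNorm_le_of_ae_bound (C := 1) (f := ((f - hmem.toLp g : MeasureTheory.Lp ℝ ⊤ μ) : M → ℝ)) (μ := μ) (p := ⊤) hae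
      rw [MeasureTheory.Lp.norm_def]
      calc (MeasureTheory.eLpNorm ((f - hmem.toLp g : MeasureTheory.Lp ℝ ⊤ μ) : M → ℝ) ⊤ μ).toReal
          ≤ (ENNReal.ofReal 1 : ℝ≥0∞).toReal := by
            apply ENNReal.toReal_mono (by simp)
            simpa using this
        _ = 1 := by simp
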